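/- The dual filter space S_V of a de Vries algebra V is order-normal: for any closed set A and regular closed set B with A ⊆ ↓(complement of B), i.e., A disjoint from the upset-interior of B, there are disjoint open sets separating them in the order-normality sense. -/

import Mathlib

/-- A de Vries algebra structure on a complete Boolean algebra `B`:
a subordination relation `prec` satisfying axioms (A1)-(A7). -/
structure DeVries (B : Type*) [CompleteBooleanAlgebra B] where
  prec : B → B → Prop
  A1 : prec ⊤ ⊤
  A2 : ∀ {a b : B}, prec a b → a ≤ b
  A3 : ∀ {a b c d : B}, a ≤ b → prec b c → c ≤ d → prec a d
  A4 : ∀ {a b c : B}, prec a b → prec a c → prec a (b ⊓ c)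
  A5 : ∀ {a b : B}, prec a b → prec bᶜ aᶜ
  A6 : ∀ {a c : B}, prec a c → ∃ b, prec a b ∧ prec b c
  A7 : ∀ {a : B}, a ≠ ⊥ → ∃ b, b ≠ ⊥ ∧ prec b a

variable {B : Type*} [CompleteBooleanAlgebra B]

/-- A (proper) filter on `B`, as a set. -/
def IsProperFilter (F : Set B) : Prop :=
  ⊤ ∈ F ∧ ⊥ ∉ F ∧ (∀ a b : B, a ∈ F → a ≤ b → b ∈ F) ∧
    (∀ a b : B, a ∈ F → b ∈ F → a ⊓ b ∈ F)

/-- A concordant filter: a proper filter in which every element has a ≺-predecessor. -/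
def Concordant (V : DeVries B) (F : Set B) : Prop :=
  IsProperFilter F ∧ ∀ a ∈ F, ∃ b ∈ F, V.prec b a

/-- The dual filter space: the set of concordant filters. -/
def SV (V : DeVries B) : Type _ := {F : Set B // Concordant V F}

/-- Basic open set `â = {F : a ∈ F}`. -/
def hatt (V : DeVries B) (a : B) : Set (SV V) := {F : SV V | a ∈ F.1}

/-- The Stone-like topology on `SV V`, generated by the sets `â`. -/
instance instTopSV (V : DeVries B) : TopologicalSpace (SV V) :=
  TopologicalSpace.generateFrom {U : Set (SV V) | ∃ a : B, U = hatt V a}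

/-- Downward closure under the inclusion (specialization) order of filters. -/
def dclF (V : DeVries B) (A : Set (SV V)) : Set (SV V) :=
  {F : SV V | ∃ G ∈ A, F.1 ⊆ G.1}

/-- Interior in the upset topology of the inclusion order: all extensions lie in `A`. -/
def upIntF (V : DeVries B) (A : Set (SV V)) : Set (SV V) :=
  {F : SV V | ∀ G : SV V, F.1 ⊆ G.1 → G ∈ A}


section DVAux

variable (V : DeVries B)

lemma DV.mem_top (F : SV V) : (⊤ : B) ∈ F.1 := F.2.1.1

lemma DV.not_bot (F : SV V) : (⊥ : B) ∉ F.1 := F.2.1.2.1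

lemma DV.mem_up (F : SV V) {a b : B} (h : a ∈ F.1) (hab : a ≤ b) : b ∈ F.1 :=
  F.2.1.2.2.1 a b h hab

lemma DV.mem_inf (F : SV V) {a b : B} (ha : a ∈ F.1) (hb : b ∈ F.1) : a ⊓ b ∈ F.1 :=
  F.2.1.2.2.2 a b ha hb

lemma DV.prec_bot (x : B) : V.prec ⊥ x := by
  have h := V.A5 V.A1
  simp only [compl_top] at h
  exact V.A3 le_rfl h bot_le

lemma DV.isOpen_hatt (a : B) : IsOpen (hatt V a) :=
  TopologicalSpace.isOpen_generateFrom_of_mem ⟨a, rfl⟩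

lemma DV.exists_basic_subset {N : Set (SV V)} (hN : IsOpen N) {F : SV V} (hF : F ∈ N) :
    ∃ x ∈ F.1, hatt V x ⊆ N := by
  have hN' : TopologicalSpace.GenerateOpen {U : Set (SV V) | ∃ a : B, U = hatt V a} N := hN
  clear hN
  induction hN' with
  | basic s hs => obtain ⟨a, rfl⟩ := hs; exact ⟨a, hF, subset_rfl⟩
  | univ => exact ⟨⊤, DV.mem_top V F, fun G _ => trivial⟩
  | inter s t hs ht ihs iht =>
      obtain ⟨x, hx, hxs⟩ := ihs hF.1
      obtain ⟨y, hy, hyt⟩ := iht hF.2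
      refine ⟨x ⊓ y, DV.mem_inf V F hx hy, fun G hG => ?_⟩
      exact ⟨hxs (DV.mem_up V G hG inf_le_left), hyt (DV.mem_up V G hG inf_le_right)⟩
  | sUnion S hS ih =>
      obtain ⟨t, htS, hFt⟩ := hF
      obtain ⟨x, hx, hxt⟩ := ih t htS hFt
      exact ⟨x, hx, hxt.trans (Set.subset_sUnion_of_mem htS)⟩

lemma DV.exists_mem_SV {e : B} (he : e ≠ ⊥) : ∃ G : SV V, e ∈ G.1 := by
  have step : ∀ x : {x : B // x ≠ ⊥}, ∃ y : {x : B // x ≠ ⊥}, V.prec y.1 x.1 := by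
    intro x; obtain ⟨b, hb, hp⟩ := V.A7 x.2; exact ⟨⟨b, hb⟩, hp⟩
  choose f hf using step
  let g : ℕ → {x : B // x ≠ ⊥} := fun n => Nat.rec ⟨e, he⟩ (fun _ p => f p) n
  have hg : ∀ n, V.prec (g (n + 1)).1 (g n).1 := fun n => hf (g n)
  have hmono : ∀ n, (g (n + 1)).1 ≤ (g n).1 := fun n => V.A2 (hg n)
  have hle : ∀ n m, (g (n + m)).1 ≤ (g n).1 := by
    intro n m
    induction m with
    | zero => exact le_rfl
    | succ k ih => exact le_trans (hmono (n + k)) ih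
  have hG : Concordant V {x : B | ∃ n, (g n).1 ≤ x} := by
    refine ⟨⟨⟨0, le_top⟩, ?_, ?_, ?_⟩, ?_⟩
    · rintro ⟨n, hn⟩; exact (g n).2 (le_bot_iff.mp hn)
    · rintro a b ⟨n, hn⟩ hab; exact ⟨n, hn.trans hab⟩
    · rintro a b ⟨n, hn⟩ ⟨m, hm⟩
      refine ⟨n + m, le_inf (le_trans (hle n m) hn) (le_trans ?_ hm)⟩
      rw [Nat.add_comm]; exact hle m n
    · rintro a ⟨n, hn⟩
      exact ⟨(g (n + 1)).1, ⟨n + 1, le_rfl⟩, V.A3 le_rfl (hg n) hn⟩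
  exact ⟨⟨_, hG⟩, ⟨0, le_rfl⟩⟩

lemma DV.exists_extension (F : SV V) {c u : B} (hcu : V.prec c u) (hc : cᶜ ∉ F.1) :
    ∃ G : SV V, F.1 ⊆ G.1 ∧ u ∈ G.1 := by
  have hcT : V.prec c ⊤ := V.A3 le_rfl hcu le_top
  have hsubF : F.1 ⊆ {x : B | ∃ a ∈ F.1, ∃ d, V.prec c d ∧ a ⊓ d ≤ x} := by
    intro a ha; exact ⟨a, ha, ⊤, hcT, by simp⟩
  have hG : Concordant V {x : B | ∃ a ∈ F.1, ∃ d, V.prec c d ∧ a ⊓ d ≤ x} := by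
    refine ⟨⟨hsubF (DV.mem_top V F), ?_, ?_, ?_⟩, ?_⟩
    · rintro ⟨a, ha, d, hd, hle⟩
      have hdis : Disjoint a d := disjoint_iff.mpr (le_bot_iff.mp hle)
      have hda : d ≤ aᶜ := hdis.symm.le_compl_right
      have hca : c ≤ aᶜ := V.A2 (V.A3 le_rfl hd hda)
      exact hc (DV.mem_up V F ha (le_compl_comm.mp hca))
    · rintro x y ⟨a, ha, d, hd, hle⟩ hxy; exact ⟨a, ha, d, hd, hle.trans hxy⟩
    · rintro x y ⟨a, ha, d, hd, h1⟩ ⟨a', ha', d', hd', h2⟩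
      refine ⟨a ⊓ a', DV.mem_inf V F ha ha', d ⊓ d', V.A4 hd hd', ?_⟩
      refine le_trans ?_ (inf_le_inf h1 h2)
      exact le_inf (inf_le_inf inf_le_left inf_le_left)
        (inf_le_inf inf_le_right inf_le_right)
    · rintro x ⟨a, ha, d, hd, hle⟩
      obtain ⟨a', ha', hpa⟩ := F.2.2 a ha
      obtain ⟨d', hcd', hd'd⟩ := V.A6 hd
      refine ⟨a' ⊓ d', ⟨a', ha', d', hcd', le_rfl⟩, ?_⟩
      have h1 : V.prec (a' ⊓ d') a := V.A3 inf_le_left hpa le_rfl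
      have h2 : V.prec (a' ⊓ d') d := V.A3 inf_le_right hd'd le_rfl
      exact V.A3 le_rfl (V.A4 h1 h2) hle
  exact ⟨⟨_, hG⟩, hsubF, ⟨⊤, DV.mem_top V F, u, hcu, by simp⟩⟩

lemma DV.mem_closure_iff_basic (S : Set (SV V)) (F : SV V) :
    F ∈ closure S ↔ ∀ x ∈ F.1, ∃ G ∈ S, x ∈ G.1 := by
  rw [mem_closure_iff]
  constructor
  · intro h x hx
    obtain ⟨G, hG1, hG2⟩ := h (hatt V x) (DV.isOpen_hatt V x) hx
    exact ⟨G, hG2, hG1⟩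
  · intro h o ho hFo
    obtain ⟨x, hx, hsub⟩ := DV.exists_basic_subset V ho hFo
    obtain ⟨G, hGS, hGx⟩ := h x hx
    exact ⟨G, hsub hGx, hGS⟩

end DVAux

theorem stmt14 (V : DeVries B) (A C : Set (SV V))
    (hA : IsClosed A) (hC : closure (interior C) = C)
    (hdisj : Disjoint A (upIntF V C)) :
    ∃ U W : Set (SV V), IsOpen U ∧ IsOpen W ∧ Disjoint U W ∧
      A ⊆ dclF V U ∧ upIntF V C ⊆ W := by
  classical
  set T : Set B := {a : B | hatt V a ⊆ interior C} with hT
  set s : B := sSup T with hs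
  set b : B := sᶜ with hb
  have hCeq : C = {F : SV V | b ∉ F.1} := by
    rw [← hC]
    ext F
    rw [DV.mem_closure_iff_basic]
    constructor
    · intro h hbF
      obtain ⟨G, hGO, hGb⟩ := h b hbF
      obtain ⟨a, haG, hsub⟩ := DV.exists_basic_subset V isOpen_interior hGO
      have haT : a ∈ T := hsub
      have hab : a ⊓ b ∈ G.1 := DV.mem_inf V G haG hGb
      have hbotG : (⊥ : B) ∈ G.1 := by
        refine DV.mem_up V G hab ?_
        have has : a ≤ s := le_sSup haT
        calc a ⊓ b ≤ s ⊓ sᶜ := inf_le_inf has le_rfl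
        _ = ⊥ := by simp
      exact DV.not_bot V G hbotG
    · intro hbF x hx
      have hxs : x ⊓ s ≠ ⊥ := by
        intro h0
        exact hbF (DV.mem_up V F hx (disjoint_iff.mpr h0).le_compl_right)
      have hexa : ∃ a ∈ T, x ⊓ a ≠ ⊥ := by
        by_contra hcon
        push_neg at hcon
        apply hxs
        rw [hs, inf_sSup_eq]
        simp only [iSup_eq_bot]
        exact fun a ha => hcon a ha
      obtain ⟨a, haT, hxa⟩ := hexa
      obtain ⟨G, hG⟩ := DV.exists_mem_SV V hxa
      exact ⟨G, haT (DV.mem_up V G hG inf_le_right), DV.mem_up V G hG inf_le_left⟩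
  have hKeq : upIntF V C = {F : SV V | ∀ c : B, V.prec c b → cᶜ ∈ F.1} := by
    ext F
    constructor
    · intro h c hcb
      by_contra hcF
      obtain ⟨G, hFG, hbG⟩ := DV.exists_extension V F hcb hcF
      have hGC := h G hFG
      rw [hCeq] at hGC
      exact hGC hbG
    · intro h G hFG
      rw [hCeq]
      intro hbG
      obtain ⟨c, hcG, hcb⟩ := G.2.2 b hbG
      have hbot := DV.mem_inf V G hcG (hFG (h c hcb))
      rw [inf_compl_eq_bot] at hbot
      exact DV.not_bot V G hbot
  by_cases htop : V.prec ⊤ b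
  · refine ⟨Set.univ, ∅, isOpen_univ, isOpen_empty, ?_, ?_, ?_⟩
    · exact Set.disjoint_empty _
    · intro F _; exact ⟨F, trivial, subset_rfl⟩
    · intro F hF
      rw [hKeq] at hF
      have h1 := hF ⊤ htop
      rw [compl_top] at h1
      exact absurd h1 (DV.not_bot V F)
  · have hFstar : Concordant V {x : B | ∃ c : B, V.prec c b ∧ cᶜ ≤ x} := by
      refine ⟨⟨⟨⊥, DV.prec_bot V b, le_top⟩, ?_, ?_, ?_⟩, ?_⟩
      · rintro ⟨c, hcb, hc⟩
        have hc' : c = ⊤ := by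
          have h1 : cᶜ = ⊥ := le_bot_iff.mp hc
          have h2 := congrArg compl h1
          simpa using h2
        exact htop (hc' ▸ hcb)
      · rintro x y ⟨c, hcb, hc⟩ hxy; exact ⟨c, hcb, hc.trans hxy⟩
      · rintro x y ⟨c, hcb, hc⟩ ⟨c', hcb', hc'⟩
        refine ⟨c ⊔ c', ?_, ?_⟩
        · have h1 := V.A5 (V.A4 (V.A5 hcb) (V.A5 hcb'))
          simpa using h1
        · rw [compl_sup]
          exact le_inf (inf_le_left.trans hc) (inf_le_right.trans hc')
      · rintro x ⟨c, hcb, hc⟩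
        obtain ⟨d, hcd, hdb⟩ := V.A6 hcb
        exact ⟨dᶜ, ⟨d, hdb, le_rfl⟩, V.A3 le_rfl (V.A5 hcd) hc⟩
    have hFsK : (⟨_, hFstar⟩ : SV V) ∈ upIntF V C := by
      rw [hKeq]
      intro c hcb
      exact ⟨c, hcb, le_rfl⟩
    have hex : ∃ u : B, V.prec u b ∧ ∀ F ∈ A, ∃ c : B, V.prec c u ∧ cᶜ ∉ F.1 := by
      by_contra hcon
      push_neg at hcon
      have hclA : (⟨_, hFstar⟩ : SV V) ∈ closure A := by
        refine (DV.mem_closure_iff_basic V A _).mpr ?_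
        rintro x ⟨c, hcb, hcx⟩
        obtain ⟨u, hcu, hub⟩ := V.A6 hcb
        obtain ⟨F, hFA, hF⟩ := hcon u hub
        exact ⟨F, hFA, DV.mem_up V F (hF c hcu) hcx⟩
      rw [hA.closure_eq] at hclA
      exact Set.disjoint_left.mp hdisj hclA hFsK
    obtain ⟨u, hub, hu⟩ := hex
    refine ⟨hatt V u, hatt V uᶜ, DV.isOpen_hatt V u, DV.isOpen_hatt V uᶜ, ?_, ?_, ?_⟩
    · rw [Set.disjoint_left]
      intro F hFu hFuc
      have hbot := DV.mem_inf V F hFu hFuc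
      rw [inf_compl_eq_bot] at hbot
      exact DV.not_bot V F hbot
    · intro F hFA
      obtain ⟨c, hcu, hcF⟩ := hu F hFA
      obtain ⟨G, hFG, huG⟩ := DV.exists_extension V F hcu hcF
      exact ⟨G, huG, hFG⟩
    · intro F hF
      rw [hKeq] at hF
      exact hF u hub
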